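/- Let M, N be n×n matrices with A = M + N invertible, α > 0, ω ∈ [0,2), and assume H = αI + M and S = αI + N are invertible. Let J_S and P_H be n×n matrices with ‖J_S‖ ≤ 1 and ‖P_H‖ ≤ 1. Let b = Ax for some vector x, let x̂ ≠ x, and let Δr be a vector satisfying ‖Δr‖ ≤ ε_s‖b − Ax̂‖ + ε_r(‖A‖‖x̂‖ + ‖b‖) for some ε_s, ε_r ≥ 0. Define μ by ‖b − Ax̂‖ = μ‖A‖‖x − x̂‖. Then ‖(I+J_S)S⁻¹H⁻¹(I+P_H)·Δr‖ ≤ 4·(c_F·κ(A)/(α(2−ω)))·((μ·ε_s + ε_r)‖x − x̂‖ + 2ε_r‖x‖), where c_F = ‖I − T_F(α,ω)‖. -/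

import Mathlib

set_option maxHeartbeats 1000000
set_option synthInstance.maxHeartbeats 400000


open Matrix

/-- The spectral (operator 2-)norm of a real matrix. -/
noncomputable def specNorm {n : ℕ} (A : Matrix (Fin n) (Fin n) ℝ) : ℝ :=
  ‖Matrix.toEuclideanCLM (𝕜 := ℝ) A‖

/-- The Euclidean norm of a real vector. -/
noncomputable def vecNorm {n : ℕ} (v : Fin n → ℝ) : ℝ :=
  ‖(WithLp.equiv 2 (Fin n → ℝ)).symm v‖

/-- The (2-norm) condition number `κ(B) = ‖B‖‖B⁻¹‖`. -/
noncomputable def condNum {n : ℕ} (A : Matrix (Fin n) (Fin n) ℝ) : ℝ :=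
  specNorm A * specNorm A⁻¹

/-- The GADI iteration matrix `T_F(α,ω) = S⁻¹ H⁻¹ (α² I + M N − (1−ω) α A)`
with `A = M + N`, `H = α I + M`, `S = α I + N`. -/
noncomputable def gadiTF {n : ℕ} (M N : Matrix (Fin n) (Fin n) ℝ) (α ω : ℝ) :
    Matrix (Fin n) (Fin n) ℝ :=
  (α • 1 + N)⁻¹ * (α • 1 + M)⁻¹ * ((α ^ 2) • 1 + M * N - ((1 - ω) * α) • (M + N))

lemma specNorm_nonneg {n : ℕ} (A : Matrix (Fin n) (Fin n) ℝ) : 0 ≤ specNorm A :=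
  norm_nonneg _

lemma specNorm_mul_le {n : ℕ} (A B : Matrix (Fin n) (Fin n) ℝ) :
    specNorm (A * B) ≤ specNorm A * specNorm B := by
  simp only [specNorm, _root_.map_mul]
  exact norm_mul_le _ _

lemma specNorm_one_le {n : ℕ} : specNorm (1 : Matrix (Fin n) (Fin n) ℝ) ≤ 1 := by
  simp only [specNorm, _root_.map_one]
  rw [ContinuousLinearMap.one_def]
  exact ContinuousLinearMap.norm_id_le

lemma specNorm_add_le {n : ℕ} (A B : Matrix (Fin n) (Fin n) ℝ) :
    specNorm (A + B) ≤ specNorm A + specNorm B := by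
  simp only [specNorm, map_add]
  exact norm_add_le _ _

lemma specNorm_smul {n : ℕ} (c : ℝ) (A : Matrix (Fin n) (Fin n) ℝ) :
    specNorm (c • A) = |c| * specNorm A := by
  simp only [specNorm, _root_.map_smul]
  exact (norm_smul c (Matrix.toEuclideanCLM (𝕜 := ℝ) A)).trans (by rw [Real.norm_eq_abs])

lemma vecNorm_nonneg {n : ℕ} (v : Fin n → ℝ) : 0 ≤ vecNorm v := norm_nonneg _

lemma vecNorm_mulVec_le {n : ℕ} (A : Matrix (Fin n) (Fin n) ℝ) (v : Fin n → ℝ) :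
    vecNorm (A *ᵥ v) ≤ specNorm A * vecNorm v := by
  have h := (Matrix.toEuclideanCLM (𝕜 := ℝ) A).le_opNorm ((WithLp.equiv 2 (Fin n → ℝ)).symm v)
  rw [WithLp.equiv_symm_apply, Matrix.toEuclideanCLM_toLp] at h
  exact h

lemma vecNorm_sub_le {n : ℕ} (u v : Fin n → ℝ) :
    vecNorm (u - v) ≤ vecNorm u + vecNorm v := by
  simp only [vecNorm, WithLp.equiv_symm_apply, WithLp.toLp_sub]
  exact norm_sub_le _ _

/-- **Residual-perturbation bound (cf. (3.13)).** If `‖J_S‖, ‖P_H‖ ≤ 1`, `b = A x`, `x̂ ≠ x`,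
`‖Δr‖ ≤ ε_s‖b − A x̂‖ + ε_r(‖A‖‖x̂‖ + ‖b‖)`, and `‖b − A x̂‖ = μ‖A‖‖x − x̂‖`, then
`‖(I+J_S)S⁻¹H⁻¹(I+P_H)Δr‖ ≤ 4 (c_F κ(A)/(α(2−ω))) ((μ ε_s + ε_r)‖x − x̂‖ + 2 ε_r‖x‖)`,
where `c_F = ‖I − T_F(α,ω)‖`. -/
theorem residual_perturbation_bound {n : ℕ}
    (M N A H S : Matrix (Fin n) (Fin n) ℝ) (hA : A = M + N)
    (α ω : ℝ) (hα : 0 < α) (hω : ω ∈ Set.Ico (0 : ℝ) 2)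
    (hH : H = α • 1 + M) (hS : S = α • 1 + N)
    (hAinv : IsUnit A.det) (hHinv : IsUnit H.det) (hSinv : IsUnit S.det)
    (J_S P_H : Matrix (Fin n) (Fin n) ℝ)
    (hJS : specNorm J_S ≤ 1) (hPH : specNorm P_H ≤ 1)
    (b x xh Δr : Fin n → ℝ) (hb : b = A *ᵥ x) (hxh : xh ≠ x)
    (εs εr : ℝ) (hεs : 0 ≤ εs) (hεr : 0 ≤ εr)
    (hΔr : vecNorm Δr ≤
      εs * vecNorm (b - A *ᵥ xh) + εr * (specNorm A * vecNorm xh + vecNorm b))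
    (μ : ℝ) (hμ : vecNorm (b - A *ᵥ xh) = μ * specNorm A * vecNorm (x - xh)) :
    vecNorm (((1 + J_S) * S⁻¹ * H⁻¹ * (1 + P_H)) *ᵥ Δr) ≤
      4 * (specNorm (1 - gadiTF M N α ω) * condNum A / (α * (2 - ω))) *
        ((μ * εs + εr) * vecNorm (x - xh) + 2 * εr * vecNorm x) := by
  subst hA hH hS hb
  obtain ⟨hω0, hω2⟩ := hω
  set A := M + N with hA
  set H := α • 1 + M with hH
  set S := α • 1 + N with hS
  have hc : (0 : ℝ) < (2 - ω) * α := mul_pos (by linarith) hα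
  -- the key identity : S⁻¹ * H⁻¹ = ((2-ω)*α)⁻¹ • ((1 - gadiTF M N α ω) * A⁻¹)
  have hHS : H * S = (α ^ 2) • 1 + M * N + α • A := by
    simp only [hH, hS, hA, Matrix.add_mul, Matrix.mul_add, Matrix.smul_mul, Matrix.mul_smul,
      smul_smul, Matrix.one_mul, Matrix.mul_one, smul_add]
    ring_nf
    abel
  have hid : 1 - gadiTF M N α ω = S⁻¹ * H⁻¹ * (((2 - ω) * α) • A) := by
    have h1 : S⁻¹ * H⁻¹ * (H * S) = 1 := by
      rw [show S⁻¹ * H⁻¹ * (H * S) = S⁻¹ * (H⁻¹ * H) * S by noncomm_ring,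
        Matrix.nonsing_inv_mul _ hHinv, Matrix.mul_one, Matrix.nonsing_inv_mul _ hSinv]
    have h2 : H * S - ((α ^ 2) • 1 + M * N - ((1 - ω) * α) • A) = ((2 - ω) * α) • A := by
      rw [hHS]
      rw [show ((2 - ω) * α) • A = α • A + ((1 - ω) * α) • A by rw [← add_smul]; ring_nf]
      abel
    have hg : gadiTF M N α ω = S⁻¹ * H⁻¹ * ((α ^ 2) • 1 + M * N - ((1 - ω) * α) • A) := rfl
    rw [hg]
    nth_rewrite 1 [← h1]
    rw [← Matrix.mul_sub, h2]
  have hkey : S⁻¹ * H⁻¹ = ((2 - ω) * α)⁻¹ • ((1 - gadiTF M N α ω) * A⁻¹) := by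
    rw [hid, Matrix.mul_assoc, Matrix.smul_mul, Matrix.mul_nonsing_inv _ hAinv,
      Matrix.mul_smul, Matrix.mul_one, smul_smul, inv_mul_cancel₀ hc.ne', one_smul]
  -- norm bounds
  set cF := specNorm (1 - gadiTF M N α ω) with hcF
  set nA := specNorm A with hnA
  set nAi := specNorm A⁻¹ with hnAi
  have hcF0 : 0 ≤ cF := specNorm_nonneg _
  have hnA0 : 0 ≤ nA := specNorm_nonneg _
  have hnAi0 : 0 ≤ nAi := specNorm_nonneg _
  have hQ : specNorm (S⁻¹ * H⁻¹) ≤ ((2 - ω) * α)⁻¹ * (cF * nAi) := by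
    rw [hkey, specNorm_smul, abs_of_pos (inv_pos.mpr hc)]
    exact mul_le_mul_of_nonneg_left (specNorm_mul_le _ _) (inv_pos.mpr hc).le
  have hJ2 : specNorm (1 + J_S) ≤ 2 := by
    have := specNorm_add_le (1 : Matrix (Fin n) (Fin n) ℝ) J_S
    have h1 := specNorm_one_le (n := n)
    linarith
  have hP2 : specNorm (1 + P_H) ≤ 2 := by
    have := specNorm_add_le (1 : Matrix (Fin n) (Fin n) ℝ) P_H
    have h1 := specNorm_one_le (n := n)
    linarith
  -- bound on the vector
  set d := vecNorm (x - xh) with hd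
  set X := vecNorm x with hX
  have hd0 : 0 ≤ d := vecNorm_nonneg _
  have hX0 : 0 ≤ X := vecNorm_nonneg _
  set K := (μ * εs + εr) * d + 2 * εr * X with hK
  have hbX : vecNorm (A *ᵥ x) ≤ nA * X := vecNorm_mulVec_le _ _
  have hxhX : vecNorm xh ≤ X + d := by
    have h := vecNorm_sub_le x (x - xh)
    simpa using h
  have hD : vecNorm Δr ≤ nA * K := by
    have h1 : εr * (nA * vecNorm xh) ≤ εr * (nA * (X + d)) := by
      apply mul_le_mul_of_nonneg_left _ hεr
      exact mul_le_mul_of_nonneg_left hxhX hnA0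
    have h2 : εr * vecNorm (A *ᵥ x) ≤ εr * (nA * X) := mul_le_mul_of_nonneg_left hbX hεr
    rw [hμ] at hΔr
    nlinarith [hΔr]
  have hD0 : 0 ≤ vecNorm Δr := vecNorm_nonneg _
  have hK0 : 0 ≤ nA * K := le_trans hD0 hD
  -- assemble
  have hmain : vecNorm (((1 + J_S) * S⁻¹ * H⁻¹ * (1 + P_H)) *ᵥ Δr) ≤
      specNorm (1 + J_S) * specNorm (S⁻¹ * H⁻¹) * specNorm (1 + P_H) * vecNorm Δr := by
    calc vecNorm (((1 + J_S) * S⁻¹ * H⁻¹ * (1 + P_H)) *ᵥ Δr)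
        ≤ specNorm ((1 + J_S) * S⁻¹ * H⁻¹ * (1 + P_H)) * vecNorm Δr :=
          vecNorm_mulVec_le _ _
      _ ≤ (specNorm ((1 + J_S) * S⁻¹ * H⁻¹) * specNorm (1 + P_H)) * vecNorm Δr := by
          exact mul_le_mul_of_nonneg_right (specNorm_mul_le _ _) hD0
      _ ≤ (specNorm ((1 + J_S) * (S⁻¹ * H⁻¹)) * specNorm (1 + P_H)) * vecNorm Δr := by
          rw [Matrix.mul_assoc]
      _ ≤ (specNorm (1 + J_S) * specNorm (S⁻¹ * H⁻¹) * specNorm (1 + P_H)) * vecNorm Δr := by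
          apply mul_le_mul_of_nonneg_right _ hD0
          exact mul_le_mul_of_nonneg_right (specNorm_mul_le _ _) (specNorm_nonneg _)
  have hQ0 : 0 ≤ specNorm (S⁻¹ * H⁻¹) := specNorm_nonneg _
  have step2 : specNorm (1 + J_S) * specNorm (S⁻¹ * H⁻¹) * specNorm (1 + P_H) * vecNorm Δr
      ≤ 4 * (((2 - ω) * α)⁻¹ * (cF * nAi)) * (nA * K) := by
    have hJ0 : 0 ≤ specNorm (1 + J_S) := specNorm_nonneg _
    have hP0 : 0 ≤ specNorm (1 + P_H) := specNorm_nonneg _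
    calc specNorm (1 + J_S) * specNorm (S⁻¹ * H⁻¹) * specNorm (1 + P_H) * vecNorm Δr
        ≤ (2 * specNorm (S⁻¹ * H⁻¹) * 2) * vecNorm Δr := by
          refine mul_le_mul_of_nonneg_right ?_ hD0
          exact mul_le_mul (mul_le_mul_of_nonneg_right hJ2 hQ0) hP2 hP0
            (mul_nonneg (by norm_num) hQ0)
      _ = 4 * (specNorm (S⁻¹ * H⁻¹) * vecNorm Δr) := by ring
      _ ≤ 4 * ((((2 - ω) * α)⁻¹ * (cF * nAi)) * (nA * K)) := by
          have h := mul_le_mul hQ hD hD0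
            (mul_nonneg (inv_pos.mpr hc).le (mul_nonneg hcF0 hnAi0))
          linarith
      _ = 4 * (((2 - ω) * α)⁻¹ * (cF * nAi)) * (nA * K) := by ring
  have heq : 4 * (cF * condNum A / (α * (2 - ω))) * K
      = 4 * (((2 - ω) * α)⁻¹ * (cF * nAi)) * (nA * K) := by
    rw [condNum, ← hnA, ← hnAi, div_eq_mul_inv, mul_comm α (2 - ω)]
    ring
  rw [heq]
  exact le_trans hmain step2
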